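/- For n >= 1, the sum over i from 1 to n-1 and over r from 1 to i of C^{i-1+r}_{i-r} * C^{n-i+r-1}_{n-i-r} equals (n-1) times the (n-1)-st Catalan number, where C^m_k = ((m-k+1)/(m+1)) * binomial(m+k, k). -/

import Mathlib

open Finset

/-- The Catalan triangle number `C^m_k = ((m-k+1)/(m+1)) * C(m+k, k)` with integer lower
index `k`, vanishing for `k < 0`. -/
def catTz (m : ℕ) (k : ℤ) : ℚ :=
  if k < 0 then 0
  else (((m : ℚ) - (k : ℚ) + 1) / ((m : ℚ) + 1)) * Nat.choose (m + k.toNat) k.toNat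

/-- Binomial coefficient with integer lower index, vanishing outside `[0, n]`. -/
def Aq (n : ℕ) (k : ℤ) : ℚ :=
  if 0 ≤ k ∧ k ≤ n then (n.choose k.toNat : ℚ) else 0

lemma Aq_of_neg {n : ℕ} {k : ℤ} (h : k < 0) : Aq n k = 0 := by
  rw [Aq, if_neg]; rintro ⟨h1, -⟩; omega

lemma Aq_of_gt {n : ℕ} {k : ℤ} (h : (n : ℤ) < k) : Aq n k = 0 := by
  rw [Aq, if_neg]; rintro ⟨-, h2⟩; omega

lemma Aq_eq {n : ℕ} {k : ℤ} (h0 : 0 ≤ k) (h1 : k ≤ n) :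
    Aq n k = (n.choose k.toNat : ℚ) := by
  rw [Aq, if_pos ⟨h0, h1⟩]

lemma Aq_symm (n : ℕ) (k : ℤ) : Aq n ((n : ℤ) - k) = Aq n k := by
  by_cases h : 0 ≤ k ∧ k ≤ n
  · rw [Aq_eq (by omega) (by omega), Aq_eq h.1 h.2]
    have ht : ((n : ℤ) - k).toNat = n - k.toNat := by omega
    rw [ht]
    exact_mod_cast Nat.choose_symm (show k.toNat ≤ n by omega)
  · rcases not_and_or.mp h with h' | h'
    · rw [show Aq n ((n:ℤ) - k) = 0 from Aq_of_gt (by omega),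
        show Aq n k = 0 from Aq_of_neg (by omega)]
    · rw [show Aq n ((n:ℤ) - k) = 0 from Aq_of_neg (by omega),
        show Aq n k = 0 from Aq_of_gt (by omega)]

lemma Aq_pascal (n : ℕ) (k : ℤ) : Aq (n + 1) k = Aq n k + Aq n (k - 1) := by
  by_cases hneg : k < 0
  · rw [Aq_of_neg hneg, Aq_of_neg hneg, Aq_of_neg (by omega)]; ring
  by_cases hbig : (n : ℤ) + 1 < k
  · rw [Aq_of_gt (by push_cast; omega), Aq_of_gt (by omega), Aq_of_gt (by omega)]; ring
  by_cases h0 : k = 0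
  · subst h0
    rw [Aq_eq (by omega) (by push_cast; omega), Aq_eq (by omega) (by omega),
      Aq_of_neg (by omega)]
    simp
  · obtain ⟨t, rfl⟩ : ∃ t : ℕ, k = (t : ℤ) + 1 := ⟨(k - 1).toNat, by omega⟩
    have h1 : ((t : ℤ) + 1).toNat = t + 1 := by omega
    have h2 : ((t : ℤ) + 1 - 1).toNat = t := by omega
    rw [Aq_eq (by omega) (by push_cast; omega), h1]
    by_cases hle : (t : ℤ) + 1 ≤ n
    · rw [Aq_eq (by omega) hle, Aq_eq (by omega) (by omega), h1, h2,
        Nat.choose_succ_succ]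
      push_cast; ring
    · have ht : t = n := by omega
      subst ht
      rw [Aq_of_gt (by omega), Aq_eq (by omega) (by omega), h2]
      simp [Nat.choose_self, Nat.choose_succ_self]

lemma Aq_vand_base (m n : ℕ) (t : ℤ) :
    ∑ k ∈ Icc (0 : ℤ) n, Aq m (t - k) * Aq n k = Aq (m + n) t := by
  induction m generalizing t with
  | zero =>
    have e : ∀ k ∈ Icc (0 : ℤ) n, Aq 0 (t - k) * Aq n k
        = if k = t then Aq n t else 0 := by
      intro k _
      by_cases h : k = t
      · subst h
        rw [if_pos rfl, Aq_eq (by omega) (by omega)]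
        simp
      · rw [if_neg h]
        rcases lt_or_gt_of_ne (show t - k ≠ 0 by omega) with h' | h'
        · rw [Aq_of_neg h', zero_mul]
        · rw [Aq_of_gt (by exact_mod_cast h'), zero_mul]
    rw [Finset.sum_congr rfl e, Finset.sum_ite_eq' (Icc (0 : ℤ) n) t fun _ => Aq n t]
    by_cases ht : t ∈ Icc (0 : ℤ) n
    · rw [if_pos ht]; norm_num
    · rw [if_neg ht]
      simp only [mem_Icc, not_and_or, not_le] at ht
      rcases ht with h' | h'
      · rw [zero_add, Aq_of_neg h']
      · rw [zero_add, Aq_of_gt h']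
  | succ m ih =>
    have e : ∀ k ∈ Icc (0 : ℤ) n, Aq (m + 1) (t - k) * Aq n k
        = Aq m (t - k) * Aq n k + Aq m (t - 1 - k) * Aq n k := by
      intro k _
      rw [Aq_pascal]
      have : t - k - 1 = t - 1 - k := by ring
      rw [this, add_mul]
    rw [Finset.sum_congr rfl e, Finset.sum_add_distrib, ih, ih,
      show m + 1 + n = (m + n) + 1 by omega, Aq_pascal]

lemma Aq_vand (m n : ℕ) (x y K : ℤ) (h1 : (n : ℤ) ≤ y + K) (h2 : y ≤ K) :
    ∑ r ∈ Icc (-K) K, Aq m (x + r) * Aq n (y - r) = Aq (m + n) (x + y) := by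
  have key : ∑ k ∈ Icc (y - K) (y + K), Aq m (x + y - k) * Aq n k = Aq (m + n) (x + y) := by
    rw [← Aq_vand_base m n (x + y)]
    symm
    apply Finset.sum_subset
    · intro k hk
      simp only [mem_Icc] at hk ⊢
      omega
    · intro k hk hnk
      simp only [mem_Icc, not_and_or, not_le] at hnk
      rcases hnk with h' | h'
      · rw [Aq_of_neg h', mul_zero]
      · rw [Aq_of_gt h', mul_zero]
  rw [← key]
  apply Finset.sum_nbij' (fun r => y - r) (fun k => y - k)
  · intro a ha; simp only [mem_Icc] at ha ⊢; omega
  · intro a ha; simp only [mem_Icc] at ha ⊢; omega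
  · intro a _; ring
  · intro a _; ring
  · intro a _
    have : x + y - (y - a) = x + a := by ring
    rw [this]

/-- `bq m r` is the rational ballot number `(r/m) C(2m, m-r)` written as a difference of
binomial coefficients. -/
def bq (m : ℕ) (r : ℤ) : ℚ :=
  Aq (2 * m - 1) ((m : ℤ) + r - 1) - Aq (2 * m - 1) ((m : ℤ) + r)

lemma bq_neg (m : ℕ) (hm : 1 ≤ m) (r : ℤ) : bq m (-r) = -bq m r := by
  unfold bq
  have e1 : (m : ℤ) + -r - 1 = ((2 * m - 1 : ℕ) : ℤ) - ((m : ℤ) + r) := by omega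
  have e2 : (m : ℤ) + -r = ((2 * m - 1 : ℕ) : ℤ) - ((m : ℤ) + r - 1) := by omega
  rw [e1, e2, Aq_symm, Aq_symm]; ring

lemma bq_zero_of_gt {m : ℕ} {r : ℤ} (hm : 1 ≤ m) (h : (m : ℤ) < r) : bq m r = 0 := by
  unfold bq
  rw [Aq_of_gt (by omega), Aq_of_gt (by omega)]; ring

lemma catTz_eq_bq (m r : ℕ) (hm : 1 ≤ m) (hr : 1 ≤ r) :
    catTz (m - 1 + r) ((m : ℤ) - r) = bq m (r : ℤ) := by
  rcases lt_trichotomy r m with h | h | h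
  · -- r < m
    rw [catTz, if_neg (by omega)]
    have ht : ((m : ℤ) - r).toNat = m - r := by omega
    rw [ht, show m - 1 + r + (m - r) = 2 * m - 1 by omega]
    unfold bq
    rw [Aq_eq (by omega) (by omega), Aq_eq (by omega) (by omega)]
    have t1 : ((m : ℤ) + r - 1).toNat = m + r - 1 := by omega
    have t2 : ((m : ℤ) + r).toNat = m + r := by omega
    rw [t1, t2]
    have s1 : (2 * m - 1).choose (m + r - 1) = (2 * m - 1).choose (m - r) := by
      rw [← Nat.choose_symm (show m + r - 1 ≤ 2 * m - 1 by omega)]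
      congr 1; omega
    have s2 : (2 * m - 1).choose (m + r) = (2 * m - 1).choose (m - r - 1) := by
      rw [← Nat.choose_symm (show m + r ≤ 2 * m - 1 by omega)]
      congr 1; omega
    rw [s1, s2]
    have hc := Nat.choose_succ_right_eq (2 * m - 1) (m - r - 1)
    rw [show m - r - 1 + 1 = m - r by omega, show 2 * m - 1 - (m - r - 1) = m + r by omega] at hc
    have hq : ((2 * m - 1).choose (m - r) : ℚ) * ((m : ℚ) - r)
        = ((2 * m - 1).choose (m - r - 1) : ℚ) * ((m : ℚ) + r) := by
      have := congrArg (fun x : ℕ => (x : ℚ)) hc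
      push_cast at this
      rw [Nat.cast_sub (by omega : r ≤ m)] at this
      push_cast at this
      linarith [this]
    have c1 : ((m - 1 + r : ℕ) : ℚ) = (m : ℚ) + r - 1 := by
      rw [show m - 1 + r = m + r - 1 from by omega, Nat.cast_sub (by omega : 1 ≤ m + r)]
      push_cast; ring
    rw [c1]
    have hm0 : (0 : ℚ) < (m : ℚ) + r := by
      have : (1 : ℚ) ≤ (m : ℚ) := by exact_mod_cast hm
      have : (0 : ℚ) ≤ (r : ℚ) := by positivity
      linarith
    push_cast
    rw [show (m : ℚ) + r - 1 + 1 = m + r by ring]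
    field_simp
    linear_combination -hq
  · -- r = m
    subst h
    rw [catTz, if_neg (by omega)]
    have ht : ((r : ℤ) - r) = 0 := by ring
    rw [ht]
    simp only [Int.toNat_zero, Nat.choose_zero_right, Nat.cast_zero, Nat.cast_one]
    unfold bq
    rw [Aq_eq (by omega) (by omega), Aq_of_gt (by omega)]
    have t1 : ((r : ℤ) + r - 1).toNat = 2 * r - 1 := by omega
    rw [t1, Nat.choose_self]
    have hd : ((r - 1 + r : ℕ) : ℚ) + 1 ≠ 0 := by positivity
    field_simp
    push_cast; ring
  · -- m < r
    rw [catTz, if_pos (by omega), bq_zero_of_gt hm (by omega)]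

lemma catalan_q (N : ℕ) (hN : 1 ≤ N) :
    (catalan N : ℚ) = ((2 * N).choose N : ℚ) - ((2 * N).choose (N - 1) : ℚ) := by
  have h1 : ((N : ℚ) + 1) * (catalan N : ℚ) = ((2 * N).choose N : ℚ) := by
    have := succ_mul_catalan_eq_centralBinom N
    rw [Nat.centralBinom] at this
    exact_mod_cast congrArg (fun x : ℕ => (x : ℚ)) this
  have h2 : (((2 * N).choose N : ℕ) : ℚ) * (N : ℚ)
      = (((2 * N).choose (N - 1) : ℕ) : ℚ) * ((N : ℚ) + 1) := by
    have hc := Nat.choose_succ_right_eq (2 * N) (N - 1)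
    rw [show N - 1 + 1 = N by omega, show 2 * N - (N - 1) = N + 1 by omega] at hc
    exact_mod_cast congrArg (fun x : ℕ => (x : ℚ)) hc
  have hN0 : ((N : ℚ) + 1) ≠ 0 := by positivity
  apply mul_left_cancel₀ hN0
  linear_combination h1 - h2

lemma bq_sum (i j : ℕ) (hi : 1 ≤ i) (hj : 1 ≤ j) :
    ∑ r ∈ Finset.Icc 1 i, bq i (r : ℤ) * bq j (r : ℤ) = (catalan (i + j - 1) : ℚ) := by
  set K : ℕ := i + j with hK
  -- step 1: pass to an integer-indexed sum over `Icc 1 K`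
  have step1 : ∑ r ∈ Finset.Icc 1 i, bq i (r : ℤ) * bq j (r : ℤ)
      = ∑ r ∈ Icc (1 : ℤ) (K : ℤ), bq i r * bq j r := by
    rw [Finset.sum_subset (show Finset.Icc 1 i ⊆ Finset.Icc 1 K by
        intro a ha; simp only [mem_Icc] at ha ⊢; omega)
      (by
        intro r hr hri
        simp only [mem_Icc] at hr hri
        rw [bq_zero_of_gt hi (by omega), zero_mul])]
    apply Finset.sum_nbij' (fun r : ℕ => (r : ℤ)) (fun k : ℤ => k.toNat)
    · intro a ha; simp only [mem_Icc] at ha ⊢; omega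
    · intro a ha; simp only [mem_Icc] at ha ⊢; omega
    · intro a _; simp
    · intro a ha; simp only [mem_Icc] at ha; omega
    · intro a _; rfl
  -- step 2: double the sum by symmetry
  have step2 : (2 : ℚ) * ∑ r ∈ Icc (1 : ℤ) (K : ℤ), bq i r * bq j r
      = ∑ r ∈ Icc (-(K : ℤ)) (K : ℤ), bq i r * bq j r := by
    have hsplit : Icc (-(K : ℤ)) (K : ℤ) = Icc (-(K : ℤ)) 0 ∪ Icc 1 (K : ℤ) := by
      ext a; simp only [mem_union, mem_Icc]; omega
    have hdisj : Disjoint (Icc (-(K : ℤ)) 0) (Icc 1 (K : ℤ)) := by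
      rw [Finset.disjoint_left]
      intro a ha ha'
      simp only [mem_Icc] at ha ha'
      omega
    rw [hsplit, Finset.sum_union hdisj]
    have hneg : ∑ r ∈ Icc (-(K : ℤ)) 0, bq i r * bq j r
        = ∑ r ∈ Icc (0 : ℤ) (K : ℤ), bq i r * bq j r := by
      apply Finset.sum_nbij' (fun r : ℤ => -r) (fun r : ℤ => -r)
      · intro a ha; simp only [mem_Icc] at ha ⊢; omega
      · intro a ha; simp only [mem_Icc] at ha ⊢; omega
      · intro a _; ring
      · intro a _; ring
      · intro a _
        rw [show a = -(-a) from by ring, bq_neg i hi, bq_neg j hj]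
        ring_nf
    rw [hneg, show Icc (0 : ℤ) (K : ℤ) = insert 0 (Icc 1 (K : ℤ)) by
        ext a; simp only [mem_insert, mem_Icc]; omega,
      Finset.sum_insert (by simp)]
    have hbq0 : bq i (0 : ℤ) = 0 := by
      have h := bq_neg i hi 0
      rw [neg_zero] at h
      linarith
    rw [hbq0, zero_mul]
    ring
  -- step 3: expand the product and apply Vandermonde four times
  have expand : ∑ r ∈ Icc (-(K : ℤ)) (K : ℤ), bq i r * bq j r
      = (∑ r ∈ Icc (-(K : ℤ)) (K : ℤ), Aq (2*i-1) ((i:ℤ) - 1 + r) * Aq (2*j-1) ((j:ℤ) - 1 + r))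
      - (∑ r ∈ Icc (-(K : ℤ)) (K : ℤ), Aq (2*i-1) ((i:ℤ) - 1 + r) * Aq (2*j-1) ((j:ℤ) + r))
      - (∑ r ∈ Icc (-(K : ℤ)) (K : ℤ), Aq (2*i-1) ((i:ℤ) + r) * Aq (2*j-1) ((j:ℤ) - 1 + r))
      + (∑ r ∈ Icc (-(K : ℤ)) (K : ℤ), Aq (2*i-1) ((i:ℤ) + r) * Aq (2*j-1) ((j:ℤ) + r)) := by
    rw [← Finset.sum_sub_distrib, ← Finset.sum_sub_distrib, ← Finset.sum_add_distrib]
    apply Finset.sum_congr rfl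
    intro r _
    unfold bq
    rw [show (i:ℤ) + r - 1 = (i:ℤ) - 1 + r by ring, show (j:ℤ) + r - 1 = (j:ℤ) - 1 + r by ring]
    ring
  have flip : ∀ (y : ℤ), (0 ≤ y) → ∀ r : ℤ,
      Aq (2*j-1) (y + r) = Aq (2*j-1) (((2*j-1 : ℕ) : ℤ) - y - r) := by
    intro y hy r
    rw [show ((2*j-1 : ℕ) : ℤ) - y - r = ((2*j-1 : ℕ) : ℤ) - (y + r) by ring, Aq_symm]
  have T1 : ∑ r ∈ Icc (-(K : ℤ)) (K : ℤ), Aq (2*i-1) ((i:ℤ) - 1 + r) * Aq (2*j-1) ((j:ℤ) - 1 + r)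
      = Aq (2 * (i + j - 1)) ((i + j - 1 : ℕ) : ℤ) := by
    have e : ∀ r ∈ Icc (-(K : ℤ)) (K : ℤ),
        Aq (2*i-1) ((i:ℤ) - 1 + r) * Aq (2*j-1) ((j:ℤ) - 1 + r)
          = Aq (2*i-1) (((i:ℤ) - 1) + r) * Aq (2*j-1) ((j:ℤ) - r) := by
      intro r _
      rw [flip ((j:ℤ) - 1) (by omega) r]
      congr 2
      omega
    rw [Finset.sum_congr rfl e, Aq_vand _ _ _ _ _ (by omega) (by omega)]
    congr 1
    · omega
    · omega
  have T2 : ∑ r ∈ Icc (-(K : ℤ)) (K : ℤ), Aq (2*i-1) ((i:ℤ) - 1 + r) * Aq (2*j-1) ((j:ℤ) + r)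
      = Aq (2 * (i + j - 1)) (((i + j - 1 : ℕ) : ℤ) - 1) := by
    have e : ∀ r ∈ Icc (-(K : ℤ)) (K : ℤ),
        Aq (2*i-1) ((i:ℤ) - 1 + r) * Aq (2*j-1) ((j:ℤ) + r)
          = Aq (2*i-1) (((i:ℤ) - 1) + r) * Aq (2*j-1) (((j:ℤ) - 1) - r) := by
      intro r _
      rw [flip (j:ℤ) (by omega) r]
      congr 2
      omega
    rw [Finset.sum_congr rfl e, Aq_vand _ _ _ _ _ (by omega) (by omega)]
    congr 1
    · omega
    · omega
  have T3 : ∑ r ∈ Icc (-(K : ℤ)) (K : ℤ), Aq (2*i-1) ((i:ℤ) + r) * Aq (2*j-1) ((j:ℤ) - 1 + r)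
      = Aq (2 * (i + j - 1)) (((i + j - 1 : ℕ) : ℤ) + 1) := by
    have e : ∀ r ∈ Icc (-(K : ℤ)) (K : ℤ),
        Aq (2*i-1) ((i:ℤ) + r) * Aq (2*j-1) ((j:ℤ) - 1 + r)
          = Aq (2*i-1) ((i:ℤ) + r) * Aq (2*j-1) ((j:ℤ) - r) := by
      intro r _
      rw [flip ((j:ℤ) - 1) (by omega) r]
      congr 2
      omega
    rw [Finset.sum_congr rfl e, Aq_vand _ _ _ _ _ (by omega) (by omega)]
    congr 1
    · omega
    · omega
  have T4 : ∑ r ∈ Icc (-(K : ℤ)) (K : ℤ), Aq (2*i-1) ((i:ℤ) + r) * Aq (2*j-1) ((j:ℤ) + r)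
      = Aq (2 * (i + j - 1)) ((i + j - 1 : ℕ) : ℤ) := by
    have e : ∀ r ∈ Icc (-(K : ℤ)) (K : ℤ),
        Aq (2*i-1) ((i:ℤ) + r) * Aq (2*j-1) ((j:ℤ) + r)
          = Aq (2*i-1) ((i:ℤ) + r) * Aq (2*j-1) (((j:ℤ) - 1) - r) := by
      intro r _
      rw [flip (j:ℤ) (by omega) r]
      congr 2
      omega
    rw [Finset.sum_congr rfl e, Aq_vand _ _ _ _ _ (by omega) (by omega)]
    congr 1
    · omega
    · omega
  have hsymmN : Aq (2 * (i + j - 1)) (((i + j - 1 : ℕ) : ℤ) + 1)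
      = Aq (2 * (i + j - 1)) (((i + j - 1 : ℕ) : ℤ) - 1) := by
    rw [← Aq_symm (2 * (i + j - 1)) (((i + j - 1 : ℕ) : ℤ) + 1)]
    congr 1
    omega
  -- put it together
  rw [step1]
  have hfull := step2
  rw [expand, T1, T2, T3, T4, hsymmN] at hfull
  have hN : 1 ≤ i + j - 1 := by omega
  have hA1 : Aq (2 * (i + j - 1)) ((i + j - 1 : ℕ) : ℤ)
      = ((2 * (i + j - 1)).choose (i + j - 1) : ℚ) := by
    rw [Aq_eq (by omega) (by omega),
      show ((i + j - 1 : ℕ) : ℤ).toNat = i + j - 1 by omega]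
  have hA2 : Aq (2 * (i + j - 1)) (((i + j - 1 : ℕ) : ℤ) - 1)
      = ((2 * (i + j - 1)).choose (i + j - 1 - 1) : ℚ) := by
    rw [Aq_eq (by omega) (by omega),
      show (((i + j - 1 : ℕ) : ℤ) - 1).toNat = i + j - 1 - 1 by omega]
  rw [hA1, hA2] at hfull
  rw [catalan_q (i + j - 1) hN]
  linarith

theorem catalan_triangle_diag_sum (n : ℕ) (hn : 1 ≤ n) :
    ∑ i ∈ Finset.Icc 1 (n - 1), ∑ r ∈ Finset.Icc 1 i,
        catTz (i - 1 + r) ((i : ℤ) - r) * catTz (n - i + r - 1) ((n : ℤ) - i - r)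
      = ((n : ℚ) - 1) * catalan (n - 1) := by
  have key : ∀ i ∈ Finset.Icc 1 (n - 1),
      ∑ r ∈ Finset.Icc 1 i,
        catTz (i - 1 + r) ((i : ℤ) - r) * catTz (n - i + r - 1) ((n : ℤ) - i - r)
      = (catalan (n - 1) : ℚ) := by
    intro i hi
    simp only [mem_Icc] at hi
    obtain ⟨hi1, hi2⟩ := hi
    have hj : 1 ≤ n - i := by omega
    have e : ∀ r ∈ Finset.Icc 1 i,
        catTz (i - 1 + r) ((i : ℤ) - r) * catTz (n - i + r - 1) ((n : ℤ) - i - r)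
          = bq i (r : ℤ) * bq (n - i) (r : ℤ) := by
      intro r hr
      simp only [mem_Icc] at hr
      rw [catTz_eq_bq i r hi1 hr.1]
      congr 1
      rw [show n - i + r - 1 = (n - i) - 1 + r by omega,
        show (n : ℤ) - i - r = ((n - i : ℕ) : ℤ) - r by omega]
      exact catTz_eq_bq (n - i) r hj hr.1
    rw [Finset.sum_congr rfl e, bq_sum i (n - i) hi1 hj,
      show i + (n - i) - 1 = n - 1 by omega]
  rw [Finset.sum_congr rfl key, Finset.sum_const, nsmul_eq_mul, Nat.card_Icc]
  rw [show n - 1 + 1 - 1 = n - 1 by omega, Nat.cast_sub hn]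
  push_cast
  ring
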